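/- For every i ≥ 0, the Linear Ordering instance (V_i, K_i) built from the triangle decomposition C_i of G_i (each directed triangle uvwu contributing the three constraints (u,v,w), (v,w,u), (w,u,v)) has maximum deviation 0: no linear ordering of V_i satisfies more than |K_i|/6 constraints. -/

import Mathlib

/-- The vertex set of the recursively constructed graph `G_i`. -/
def Vt : ℕ → Type
  | 0 => Fin 3
  | (i+1) => Vt i ⊕ Vt i

instance VtDecEq : (i : ℕ) → DecidableEq (Vt i)
  | 0 => inferInstanceAs (DecidableEq (Fin 3))
  | (i+1) => @instDecidableEqSum _ _ (VtDecEq i) (VtDecEq i)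

instance VtFintype : (i : ℕ) → Fintype (Vt i)
  | 0 => inferInstanceAs (Fintype (Fin 3))
  | (i+1) => @instFintypeSum _ _ (VtFintype i) (VtFintype i)

/-- The triangle decomposition `C_i` of `G_i`: a directed triangle `u v w u` is stored as
`(u, v, w)`. At each step the chosen triangle in each of the two copies is the first one. -/
def Ct : (i : ℕ) → List (Vt i × Vt i × Vt i)
  | 0 => [((0 : Fin 3), (1 : Fin 3), (2 : Fin 3)), ((2 : Fin 3), (1 : Fin 3), (0 : Fin 3))]
  | (i+1) =>
    match Ct i with
    | [] => []
    | (a, b, c) :: rest =>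
      (rest.map fun t => ((Sum.inl t.1 : Vt (i+1)), Sum.inl t.2.1, Sum.inl t.2.2)) ++
      (rest.map fun t => ((Sum.inr t.1 : Vt (i+1)), Sum.inr t.2.1, Sum.inr t.2.2)) ++
      [ ((Sum.inl a : Vt (i+1)), Sum.inl b, Sum.inr c),
        ((Sum.inl b : Vt (i+1)), Sum.inl c, Sum.inr b),
        ((Sum.inl c : Vt (i+1)), Sum.inl a, Sum.inr a),
        ((Sum.inr a : Vt (i+1)), Sum.inr b, Sum.inl c),
        ((Sum.inr b : Vt (i+1)), Sum.inr c, Sum.inl b),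
        ((Sum.inr c : Vt (i+1)), Sum.inr a, Sum.inl a) ]

/-- The Linear Ordering instance `K_i`: each directed triangle `u v w u` contributes the
constraints `(u,v,w)`, `(v,w,u)` and `(w,u,v)`. -/
def Kt (i : ℕ) : List (Vt i × Vt i × Vt i) :=
  (Ct i).flatMap fun t => [t, (t.2.1, t.2.2, t.1), (t.2.2, t.1, t.2.1)]

lemma ct_ne_nil (i : ℕ) : Ct i ≠ [] := by
  induction i with
  | zero => simp [Ct]
  | succ i ih =>
    obtain ⟨⟨a, b, c⟩, rest, h⟩ := List.exists_cons_of_ne_nil ih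
    simp [Ct, h, Vt]

lemma ct_distinct (i : ℕ) : ∀ t ∈ Ct i, t.1 ≠ t.2.1 ∧ t.2.1 ≠ t.2.2 ∧ t.1 ≠ t.2.2 := by
  induction i with
  | zero => decide
  | succ i ih =>
    obtain ⟨⟨a, b, c⟩, rest, h⟩ := List.exists_cons_of_ne_nil (ct_ne_nil i)
    have hhead := ih (a, b, c) (by rw [h]; exact List.mem_cons_self)
    obtain ⟨hab, hbc, hac⟩ := hhead
    replace hab : a ≠ b := hab
    replace hbc : b ≠ c := hbc
    replace hac : a ≠ c := hac
    change ∀ t : (Vt i ⊕ Vt i) × (Vt i ⊕ Vt i) × (Vt i ⊕ Vt i),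
      @Membership.mem _ (List ((Vt i ⊕ Vt i) × (Vt i ⊕ Vt i) × (Vt i ⊕ Vt i))) List.instMembership
        (Ct (i+1)) t → t.1 ≠ t.2.1 ∧ t.2.1 ≠ t.2.2 ∧ t.1 ≠ t.2.2
    intro t ht
    have e : Ct (i+1) = ((rest.map fun t => ((Sum.inl t.1 : Vt i ⊕ Vt i), (Sum.inl t.2.1 : Vt i ⊕ Vt i), (Sum.inl t.2.2 : Vt i ⊕ Vt i))) ++
        (rest.map fun t => ((Sum.inr t.1 : Vt i ⊕ Vt i), (Sum.inr t.2.1 : Vt i ⊕ Vt i), (Sum.inr t.2.2 : Vt i ⊕ Vt i))) ++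
        [ (Sum.inl a, Sum.inl b, Sum.inr c), (Sum.inl b, Sum.inl c, Sum.inr b),
          (Sum.inl c, Sum.inl a, Sum.inr a), (Sum.inr a, Sum.inr b, Sum.inl c),
          (Sum.inr b, Sum.inr c, Sum.inl b), (Sum.inr c, Sum.inr a, Sum.inl a) ] :
        List ((Vt i ⊕ Vt i) × (Vt i ⊕ Vt i) × (Vt i ⊕ Vt i))) := by
      unfold Ct; rw [h]; rfl
    rw [e] at ht
    simp only [Ct, h, Vt, List.mem_append, List.mem_map, List.mem_cons] at ht
    have l1 : (Sum.inl a : Vt (i+1)) ≠ Sum.inl b := fun hh => hab (Sum.inl.inj hh)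
    have l2 : (Sum.inl b : Vt (i+1)) ≠ Sum.inl c := fun hh => hbc (Sum.inl.inj hh)
    have l3 : (Sum.inl c : Vt (i+1)) ≠ Sum.inl a := fun hh => hac (Sum.inl.inj hh).symm
    have r1 : (Sum.inr a : Vt (i+1)) ≠ Sum.inr b := fun hh => hab (Sum.inr.inj hh)
    have r2 : (Sum.inr b : Vt (i+1)) ≠ Sum.inr c := fun hh => hbc (Sum.inr.inj hh)
    have r3 : (Sum.inr c : Vt (i+1)) ≠ Sum.inr a := fun hh => hac (Sum.inr.inj hh).symm
    rcases ht with ((⟨s, hs, rfl⟩ | ⟨s, hs, rfl⟩) | ht)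
    · obtain ⟨h1, h2, h3⟩ := ih s (by rw [h]; exact List.mem_cons_of_mem _ hs)
      exact ⟨fun hh => h1 (Sum.inl.inj hh), fun hh => h2 (Sum.inl.inj hh),
        fun hh => h3 (Sum.inl.inj hh)⟩
    · obtain ⟨h1, h2, h3⟩ := ih s (by rw [h]; exact List.mem_cons_of_mem _ hs)
      exact ⟨fun hh => h1 (Sum.inr.inj hh), fun hh => h2 (Sum.inr.inj hh),
        fun hh => h3 (Sum.inr.inj hh)⟩
    · have lr : ∀ (x y : Vt i), (Sum.inl x : Vt (i+1)) ≠ Sum.inr y := fun x y hh =>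
        Sum.inl_ne_inr hh
      have rl : ∀ (x y : Vt i), (Sum.inr x : Vt (i+1)) ≠ Sum.inl y := fun x y hh =>
        Sum.inr_ne_inl hh
      rcases ht with rfl | rfl | rfl | rfl | rfl | rfl | h'
      · exact ⟨l1, lr _ _, lr _ _⟩
      · exact ⟨l2, lr _ _, lr _ _⟩
      · exact ⟨l3, lr _ _, lr _ _⟩
      · exact ⟨r1, rl _ _, rl _ _⟩
      · exact ⟨r2, rl _ _, rl _ _⟩
      · exact ⟨r3, rl _ _, rl _ _⟩
      · simp at h'

/-- clockwise indicator of three naturals -/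
def cwn (x y z : ℕ) : ℕ :=
  if (x < y ∧ y < z) ∨ (y < z ∧ z < x) ∨ (z < x ∧ x < y) then 1 else 0

/-- edge indicator -/
def bn (x y : ℕ) : ℕ := if x < y then 1 else 0

lemma cwn_eq_bn (x y z : ℕ) (_ : x ≠ y) (_ : y ≠ z) (_ : x ≠ z) :
    cwn x y z + 1 = bn x y + bn y z + bn z x := by
  unfold cwn bn
  split_ifs <;> omega

lemma bn_antisymm (x y : ℕ) (h : x ≠ y) : bn x y + bn y x = 1 := by
  unfold bn; split_ifs <;> omega

lemma cross_lemma (A B C A' B' C' : ℕ)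
    (hAB : A ≠ B) (hAC : A ≠ C) (hBC : B ≠ C)
    (hA'B' : A' ≠ B') (hA'C' : A' ≠ C') (hB'C' : B' ≠ C')
    (hAA' : A ≠ A') (hAC' : A ≠ C')
    (hBB' : B ≠ B') (hBC' : B ≠ C')
    (hCA' : C ≠ A') (hCB' : C ≠ B') :
    cwn A B C' + cwn B C B' + cwn C A A' + cwn A' B' C + cwn B' C' B + cwn C' A' A
      = 2 + cwn A B C + cwn A' B' C' := by
  have e1 := cwn_eq_bn A B C' hAB hBC' hAC'
  have e2 := cwn_eq_bn B C B' hBC hCB' hBB'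
  have e3 := cwn_eq_bn C A A' (Ne.symm hAC) hAA' hCA'
  have e4 := cwn_eq_bn A' B' C hA'B' (Ne.symm hCB') (Ne.symm hCA')
  have e5 := cwn_eq_bn B' C' B hB'C' (Ne.symm hBC') (Ne.symm hBB')
  have e6 := cwn_eq_bn C' A' A (Ne.symm hA'C') (Ne.symm hAA') (Ne.symm hAC')
  have e7 := cwn_eq_bn A B C hAB hBC hAC
  have e8 := cwn_eq_bn A' B' C' hA'B' hB'C' hA'C'
  have a1 := bn_antisymm B C' hBC'
  have a2 := bn_antisymm C' A (Ne.symm hAC')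
  have a3 := bn_antisymm C B' hCB'
  have a4 := bn_antisymm B' B (Ne.symm hBB')
  have a5 := bn_antisymm A A' hAA'
  have a6 := bn_antisymm A' C (Ne.symm hCA')
  omega

lemma bind_count {V : Type*} (α : V → ℕ) : ∀ (l : List (V × V × V)),
    (∀ t ∈ l, α t.1 ≠ α t.2.1 ∧ α t.2.1 ≠ α t.2.2 ∧ α t.1 ≠ α t.2.2) →
    (l.flatMap fun t => [t, (t.2.1, t.2.2, t.1), (t.2.2, t.1, t.2.1)]).countP
      (fun t => decide (α t.1 < α t.2.1 ∧ α t.2.1 < α t.2.2))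
      = (l.map fun t => cwn (α t.1) (α t.2.1) (α t.2.2)).sum
  | [], _ => by simp
  | t :: l, hd => by
    obtain ⟨h1, h2, h3⟩ := hd t (List.mem_cons_self)
    have ih := bind_count α l (fun s hs => hd s (List.mem_cons_of_mem _ hs))
    simp only [List.flatMap_cons, List.countP_append, ih, List.map_cons, List.sum_cons,
      List.countP_cons, List.countP_nil, decide_eq_true_eq]
    unfold cwn
    split_ifs <;> omega

lemma bind_len {V : Type*} : ∀ (l : List (V × V × V)),
    (l.flatMap fun t => [t, (t.2.1, t.2.2, t.1), (t.2.2, t.1, t.2.1)]).length = 3 * l.length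
  | [] => by simp
  | t :: l => by
    simp only [List.flatMap_cons, List.length_append, bind_len l, List.length_cons]
    simp; omega

lemma ct_count : ∀ (i : ℕ) (α : Vt i → ℕ), Function.Injective α →
    2 * ((Ct i).map fun t => cwn (α t.1) (α t.2.1) (α t.2.2)).sum = (Ct i).length := by
  intro i
  induction i with
  | zero =>
    intro α hα
    have h01 : α (0 : Fin 3) ≠ α (1 : Fin 3) := fun h => (show (0:Fin 3) ≠ 1 by decide) (hα h)
    have h02 : α (0 : Fin 3) ≠ α (2 : Fin 3) := fun h => (show (0:Fin 3) ≠ 2 by decide) (hα h)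
    have h12 : α (1 : Fin 3) ≠ α (2 : Fin 3) := fun h => (show (1:Fin 3) ≠ 2 by decide) (hα h)
    simp only [Ct, List.map_cons, List.map_nil, List.sum_cons, List.sum_nil, List.length_cons,
      List.length_nil]
    unfold cwn
    split_ifs <;> omega
  | succ i ih =>
    intro α hα
    obtain ⟨⟨a, b, c⟩, rest, h⟩ := List.exists_cons_of_ne_nil (ct_ne_nil i)
    obtain ⟨hab, hbc, hac⟩ := ct_distinct i (a, b, c) (by rw [h]; exact List.mem_cons_self)
    replace hab : a ≠ b := hab
    replace hbc : b ≠ c := hbc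
    replace hac : a ≠ c := hac
    have hL := ih (fun v => α (Sum.inl v)) (fun x y hxy => Sum.inl_injective (hα hxy))
    have hR := ih (fun v => α (Sum.inr v)) (fun x y hxy => Sum.inr_injective (hα hxy))
    rw [h] at hL hR
    simp only [List.map_cons, List.sum_cons, List.length_cons] at hL hR
    simp only [Ct, h, Vt, List.map_append, List.sum_append, List.length_append, List.map_map,
      List.length_map, List.map_cons, List.map_nil, List.sum_cons, List.sum_nil,
      List.length_cons, List.length_nil, Function.comp_def]
    have hne : ∀ (x y : Vt i), x ≠ y → α (Sum.inl x) ≠ α (Sum.inl y) := fun x y hxy hh =>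
      hxy (Sum.inl_injective (hα hh))
    have hne' : ∀ (x y : Vt i), x ≠ y → α (Sum.inr x) ≠ α (Sum.inr y) := fun x y hxy hh =>
      hxy (Sum.inr_injective (hα hh))
    have hmix : ∀ (x y : Vt i), α (Sum.inl x) ≠ α (Sum.inr y) := fun x y hh =>
      Sum.inl_ne_inr (hα hh)
    have cross := cross_lemma (α (Sum.inl a)) (α (Sum.inl b)) (α (Sum.inl c))
      (α (Sum.inr a)) (α (Sum.inr b)) (α (Sum.inr c))
      (hne a b hab) (hne a c hac) (hne b c hbc)
      (hne' a b hab) (hne' a c hac) (hne' b c hbc)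
      (hmix a a) (hmix a c) (hmix b b) (hmix b c) (hmix c a) (hmix c b)
    omega

lemma kt_count (i : ℕ) (α : Vt i → ℕ) (hα : Function.Injective α) :
    6 * (Kt i).countP (fun t => decide (α t.1 < α t.2.1 ∧ α t.2.1 < α t.2.2))
      = (Kt i).length := by
  have hd : ∀ t ∈ Ct i, α t.1 ≠ α t.2.1 ∧ α t.2.1 ≠ α t.2.2 ∧ α t.1 ≠ α t.2.2 := by
    intro t ht
    obtain ⟨d1, d2, d3⟩ := ct_distinct i t ht
    exact ⟨hα.ne d1, hα.ne d2, hα.ne d3⟩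
  rw [Kt, bind_count α (Ct i) hd, bind_len (Ct i)]
  have := ct_count i α hα
  omega

theorem stmt17 (i : ℕ) :
    (∀ α : Vt i → ℕ, Function.Injective α →
      (((Kt i).countP (fun t => decide (α t.1 < α t.2.1 ∧ α t.2.1 < α t.2.2))) : ℚ) ≤
        ((Kt i).length : ℚ) / 6) ∧
    (∃ α : Vt i → ℕ, Function.Injective α ∧
      (((Kt i).countP (fun t => decide (α t.1 < α t.2.1 ∧ α t.2.1 < α t.2.2))) : ℚ) =
        ((Kt i).length : ℚ) / 6) := by
  have key : ∀ α : Vt i → ℕ, Function.Injective α →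
      (((Kt i).countP (fun t => decide (α t.1 < α t.2.1 ∧ α t.2.1 < α t.2.2))) : ℚ) =
        ((Kt i).length : ℚ) / 6 := by
    intro α hα
    have h := kt_count i α hα
    have h' : ((6 * (Kt i).countP
        (fun t => decide (α t.1 < α t.2.1 ∧ α t.2.1 < α t.2.2)) : ℕ) : ℚ)
        = ((Kt i).length : ℚ) := by exact_mod_cast congrArg (Nat.cast : ℕ → ℚ) h
    push_cast at h'
    linarith
  refine ⟨fun α hα => le_of_eq (key α hα), ?_⟩
  have hinj : Function.Injective (fun v => ((Fintype.equivFin (Vt i)) v : ℕ)) :=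
    fun x y hxy => (Fintype.equivFin (Vt i)).injective (Fin.val_injective hxy)
  exact ⟨_, hinj, key _ hinj⟩
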